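/- In the algebra A_n^m, for each u ∈ {1,...,m} the set 𝔍_u := { Σ_{r≠u} λ_r I_r : λ_r ∈ ℂ } is a maximal ideal of A_n^m. -/

import Mathlib

/-- In the algebra `A_n^m`, for each `u < m` the set
`𝔍_u = span{I r : r ≠ u}` is a maximal ideal. -/
theorem maximal_ideal {n m : ℕ} (A : Type*) [CommRing A] [Algebra ℂ A]
    (I : Module.Basis (Fin n) ℂ A)
    (h1 : ∀ r s : Fin n, (r : ℕ) < m → (s : ℕ) < m →
      I r * I s = if r = s then I r else 0)
    (h2 : ∀ r s : Fin n, m ≤ (r : ℕ) → m ≤ (s : ℕ) →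
      I r * I s ∈ Submodule.span ℂ {x : A | ∃ p : Fin n, max r s < p ∧ x = I p})
    (uu : Fin n → Fin n)
    (h3 : ∀ s : Fin n, m ≤ (s : ℕ) → (uu s : ℕ) < m ∧ I (uu s) * I s = I s ∧
      ∀ r : Fin n, (r : ℕ) < m → r ≠ uu s → I r * I s = 0)
    (hone : (1 : A) = ∑ r ∈ Finset.univ.filter (fun r : Fin n => (r : ℕ) < m), I r)
    (u : Fin n) (hu : (u : ℕ) < m) :
    ∃ J : Ideal A, J.IsMaximal ∧
      (J : Set A) = (Submodule.span ℂ {x : A | ∃ r : Fin n, r ≠ u ∧ x = I r} : Set A) := by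
  classical
  set c : A →ₗ[ℂ] ℂ := I.coord u with hc
  have hcI : ∀ r : Fin n, c (I r) = if r = u then 1 else 0 := by
    intro r
    simp [hc, Module.Basis.coord_apply, Finsupp.single_apply]
  have hspan0 : ∀ (S : Set A), (∀ x ∈ S, c x = 0) →
      ∀ x ∈ Submodule.span ℂ S, c x = 0 := by
    intro S hS x hx
    have hle : Submodule.span ℂ S ≤ LinearMap.ker c :=
      Submodule.span_le.mpr fun y hy => LinearMap.mem_ker.mpr (hS y hy)
    exact LinearMap.mem_ker.mp (hle hx)
  have hu_ne : ∀ s : Fin n, m ≤ (s : ℕ) → s ≠ u := by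
    intro s hs h
    rw [h] at hs
    exact absurd hu (not_lt.mpr hs)
  have haux : ∀ r s : Fin n, (r : ℕ) < m → m ≤ (s : ℕ) → c (I r * I s) = 0 := by
    intro r s hr hs
    obtain ⟨h3a, h3b, h3c⟩ := h3 s hs
    by_cases hre : r = uu s
    · rw [hre, h3b, hcI, if_neg (hu_ne s hs)]
    · rw [h3c r hr hre, map_zero]
  have hmulb : ∀ r s : Fin n, c (I r * I s) = c (I r) * c (I s) := by
    intro r s
    by_cases hr : (r : ℕ) < m <;> by_cases hs : (s : ℕ) < m
    · rw [h1 r s hr hs]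
      rcases eq_or_ne r s with h | h
      · subst h; rw [if_pos rfl, hcI]; split_ifs <;> norm_num
      · rw [if_neg h, map_zero, hcI, hcI]
        split_ifs with ha hb
        · exact absurd (ha.trans hb.symm) h
        all_goals ring
    · rw [haux r s hr (le_of_not_gt hs), hcI s, if_neg (hu_ne s (le_of_not_gt hs)), mul_zero]
    · rw [mul_comm, haux s r hs (le_of_not_gt hr), hcI r,
        if_neg (hu_ne r (le_of_not_gt hr)), zero_mul]
    · have hr' := le_of_not_gt hr
      have hs' := le_of_not_gt hs
      have hL : c (I r * I s) = 0 := by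
        refine hspan0 _ ?_ _ (h2 r s hr' hs')
        rintro x ⟨p, hp, rfl⟩
        have : m ≤ (p : ℕ) := le_trans hr' (le_of_lt (lt_of_le_of_lt (le_max_left r s) hp))
        rw [hcI, if_neg (hu_ne p this)]
      rw [hL, hcI r, if_neg (hu_ne r hr'), zero_mul]
  have hone' : c 1 = 1 := by
    rw [hone, map_sum]
    simp only [hcI]
    rw [Finset.sum_ite_eq' _ u]
    simp [hu]
  have hmul' : ∀ x y : A, c (x * y) = c x * c y := by
    intro x y
    conv_lhs => rw [← I.sum_repr x, ← I.sum_repr y]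
    conv_rhs => rw [← I.sum_repr x, ← I.sum_repr y]
    rw [Finset.sum_mul_sum, map_sum, map_sum, map_sum, Finset.sum_mul_sum]
    refine Finset.sum_congr rfl fun r _ => ?_
    rw [map_sum]
    refine Finset.sum_congr rfl fun s _ => ?_
    rw [smul_mul_smul_comm, map_smul, hmulb]
    rw [map_smul, map_smul]; simp only [smul_eq_mul]; ring
  let φ : A →+* ℂ :=
    { toFun := c
      map_one' := hone'
      map_mul' := hmul'
      map_zero' := map_zero c
      map_add' := map_add c }
  have hsurj : Function.Surjective φ := by
    intro z
    refine ⟨z • 1, ?_⟩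
    show c (z • 1) = z
    rw [map_smul, hone', smul_eq_mul, mul_one]
  refine ⟨RingHom.ker φ, RingHom.ker_isMaximal_of_surjective φ hsurj, ?_⟩
  ext x
  simp only [SetLike.mem_coe, RingHom.mem_ker]
  constructor
  · intro hx
    have hx' : c x = 0 := hx
    have hrepr : I.repr x u = 0 := by
      simpa [hc, Module.Basis.coord_apply] using hx'
    rw [← I.sum_repr x]
    refine Submodule.sum_mem _ fun r _ => ?_
    by_cases hru : r = u
    · subst hru; rw [hrepr, zero_smul]; exact Submodule.zero_mem _
    · exact Submodule.smul_mem _ _ (Submodule.subset_span ⟨r, hru, rfl⟩)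
  · intro hx
    exact hspan0 _ (by rintro y ⟨r, hr, rfl⟩; rw [hcI, if_neg hr]) x hx
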